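/- Let F : ℝ → ℝ be four times continuously differentiable with F′(x̄) ≠ 0 for all x̄, and let a₀, a₁ : ℝ → ℝ. Let S_F := F′′′/F′ − (3/2)(F″/F′)² denote the Schwarzian derivative of F. Define ā₁ := F′²·(a₁∘F) + 2S_F and ā₀ := F′³·(a₀∘F) + F′F″·(a₁∘F) + S_F′. If y : ℝ → ℝ is three times continuously differentiable and satisfies y′′′ + a₁y′ + a₀y = 0 on ℝ, then ȳ := (y∘F)/F′ satisfies ȳ′′′ + ā₁ȳ′ + ā₀ȳ = 0 on ℝ. -/

import Mathlib

/-- The Schwarzian derivative `S_F = F′′′/F′ − (3/2)(F″/F′)²`. -/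
noncomputable def schwarzian (F : ℝ → ℝ) (x : ℝ) : ℝ :=
  iteratedDeriv 3 F x / deriv F x - (3 / 2) * (iteratedDeriv 2 F x / deriv F x) ^ 2

/-- the structure invariance transformation of the normal form
`y′′′ + a₁ y′ + a₀ y = 0`: if `y` solves it, then `ȳ = (y∘F)/F′` satisfies
`ȳ′′′ + ā₁ ȳ′ + ā₀ ȳ = 0`, where `ā₁ = F′² (a₁∘F) + 2S_F` and
`ā₀ = F′³ (a₀∘F) + F′F″ (a₁∘F) + S_F′`. -/
theorem stmt_7 (F : ℝ → ℝ) (hF : ContDiff ℝ 4 F) (hF' : ∀ x, deriv F x ≠ 0)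
    (a0 a1 : ℝ → ℝ)
    (y : ℝ → ℝ) (hy : ContDiff ℝ 3 y)
    (hode : ∀ x, iteratedDeriv 3 y x + a1 x * deriv y x + a0 x * y x = 0) :
    ∀ x, iteratedDeriv 3 (fun s => y (F s) / deriv F s) x
      + ((deriv F x) ^ 2 * a1 (F x) + 2 * schwarzian F x)
          * deriv (fun s => y (F s) / deriv F s) x
      + ((deriv F x) ^ 3 * a0 (F x) + deriv F x * iteratedDeriv 2 F x * a1 (F x)
          + deriv (schwarzian F) x)
          * (y (F x) / deriv F x) = 0 := by
  have hu : ContDiff ℝ 3 (deriv F) :=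
    (contDiff_succ_iff_deriv.mp (show ContDiff ℝ (3+1) F by norm_num; exact hF)).2.2
  have hu1 : ContDiff ℝ 2 (deriv (deriv F)) :=
    (contDiff_succ_iff_deriv.mp (show ContDiff ℝ (2+1) (deriv F) by norm_num; exact hu)).2.2
  have hu2 : ContDiff ℝ 1 (deriv (deriv (deriv F))) :=
    (contDiff_succ_iff_deriv.mp (show ContDiff ℝ (1+1) (deriv (deriv F)) by norm_num; exact hu1)).2.2
  have hy1 : ContDiff ℝ 2 (deriv y) :=
    (contDiff_succ_iff_deriv.mp (show ContDiff ℝ (2+1) y by norm_num; exact hy)).2.2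
  have hy2 : ContDiff ℝ 1 (deriv (deriv y)) :=
    (contDiff_succ_iff_deriv.mp (show ContDiff ℝ (1+1) (deriv y) by norm_num; exact hy1)).2.2
  have hFd : Differentiable ℝ F := hF.differentiable (by norm_num)
  have hud : Differentiable ℝ (deriv F) := hu.differentiable (by norm_num)
  have hu1d : Differentiable ℝ (deriv (deriv F)) := hu1.differentiable (by norm_num)
  have hu2d : Differentiable ℝ (deriv (deriv (deriv F))) := hu2.differentiable (by norm_num)
  have hyd : Differentiable ℝ y := hy.differentiable (by norm_num)
  have hy1d : Differentiable ℝ (deriv y) := hy1.differentiable (by norm_num)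
  have hy2d : Differentiable ℝ (deriv (deriv y)) := hy2.differentiable (by norm_num)
  have hit2 : iteratedDeriv 2 F = deriv (deriv F) := by
    rw [show (2:ℕ) = 1+1 from rfl, iteratedDeriv_succ, iteratedDeriv_one]
  have hit3 : iteratedDeriv 3 F = deriv (deriv (deriv F)) := by
    rw [show (3:ℕ) = 2+1 from rfl, iteratedDeriv_succ, hit2]
  have hit3y : iteratedDeriv 3 y = deriv (deriv (deriv y)) := by
    rw [show (3:ℕ) = 2+1 from rfl, iteratedDeriv_succ,
      show (2:ℕ) = 1+1 from rfl, iteratedDeriv_succ, iteratedDeriv_one]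
  set u := deriv F with hu_def
  set u1 := deriv (deriv F) with hu1_def
  set u2 := deriv (deriv (deriv F)) with hu2_def
  -- step 1
  have key1 : ∀ x, HasDerivAt (fun s => y (F s) / u s)
      (deriv y (F x) - y (F x) * u1 x / (u x)^2) x := by
    intro x
    have hux : HasDerivAt u (u1 x) x := (hud x).hasDerivAt
    have hY : HasDerivAt (fun s => y (F s)) (deriv y (F x) * u x) x :=
      (hyd (F x)).hasDerivAt.comp x (hFd x).hasDerivAt
    have := hY.div hux (hF' x)
    refine this.congr_deriv ?_
    have h := hF' x
    field_simp
  have hw1 : deriv (fun s => y (F s) / u s)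
      = fun x => deriv y (F x) - y (F x) * u1 x / (u x)^2 :=
    funext fun x => (key1 x).deriv
  -- step 2
  have key2 : ∀ x, HasDerivAt (fun x => deriv y (F x) - y (F x) * u1 x / (u x)^2)
      ((deriv (deriv y) (F x) * (u x)^4 - deriv y (F x) * u1 x * (u x)^2
        - y (F x) * u2 x * u x + 2 * y (F x) * (u1 x)^2) / (u x)^3) x := by
    intro x
    have hux : HasDerivAt u (u1 x) x := (hud x).hasDerivAt
    have hu1x : HasDerivAt u1 (u2 x) x := (hu1d x).hasDerivAt
    have hY : HasDerivAt (fun s => y (F s)) (deriv y (F x) * u x) x :=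
      (hyd (F x)).hasDerivAt.comp x (hFd x).hasDerivAt
    have hY1 : HasDerivAt (fun s => deriv y (F s)) (deriv (deriv y) (F x) * u x) x :=
      (hy1d (F x)).hasDerivAt.comp x (hFd x).hasDerivAt
    have hnum : HasDerivAt (fun s => y (F s) * u1 s)
        (deriv y (F x) * u x * u1 x + y (F x) * u2 x) x := hY.mul hu1x
    have hden : HasDerivAt (fun s => (u s)^2) (2 * u x * u1 x) x := by
      have := hux.pow 2
      norm_num at this
      exact this
    have := hY1.sub (hnum.div hden (pow_ne_zero 2 (hF' x)))
    refine this.congr_deriv ?_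
    have h := hF' x
    field_simp
    ring
  have hw2 : deriv (fun x => deriv y (F x) - y (F x) * u1 x / (u x)^2)
      = fun x => (deriv (deriv y) (F x) * (u x)^4 - deriv y (F x) * u1 x * (u x)^2
        - y (F x) * u2 x * u x + 2 * y (F x) * (u1 x)^2) / (u x)^3 :=
    funext fun x => (key2 x).deriv
  -- step 3
  have key3 : ∀ x, HasDerivAt (fun x => (deriv (deriv y) (F x) * (u x)^4
        - deriv y (F x) * u1 x * (u x)^2
        - y (F x) * u2 x * u x + 2 * y (F x) * (u1 x)^2) / (u x)^3)
      ((deriv (deriv (deriv y)) (F x) * (u x)^6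
        - 2 * deriv y (F x) * u2 x * (u x)^3
        + 3 * deriv y (F x) * (u1 x)^2 * (u x)^2
        - y (F x) * deriv u2 x * (u x)^2
        + 6 * y (F x) * u1 x * u2 x * u x
        - 6 * y (F x) * (u1 x)^3) / (u x)^4) x := by
    intro x
    have hux : HasDerivAt u (u1 x) x := (hud x).hasDerivAt
    have hu1x : HasDerivAt u1 (u2 x) x := (hu1d x).hasDerivAt
    have hu2x : HasDerivAt u2 (deriv u2 x) x := (hu2d x).hasDerivAt
    have hY : HasDerivAt (fun s => y (F s)) (deriv y (F x) * u x) x :=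
      (hyd (F x)).hasDerivAt.comp x (hFd x).hasDerivAt
    have hY1 : HasDerivAt (fun s => deriv y (F s)) (deriv (deriv y) (F x) * u x) x :=
      (hy1d (F x)).hasDerivAt.comp x (hFd x).hasDerivAt
    have hY2 : HasDerivAt (fun s => deriv (deriv y) (F s))
        (deriv (deriv (deriv y)) (F x) * u x) x :=
      (hy2d (F x)).hasDerivAt.comp x (hFd x).hasDerivAt
    have h1 := hY2.mul (hux.pow 4)
    have h2 := (hY1.mul hu1x).mul (hux.pow 2)
    have h3 := (hY.mul hu2x).mul hux
    have h4 := ((hY.const_mul (2:ℝ)).mul (hu1x.pow 2))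
    have hN := ((h1.sub h2).sub h3).add h4
    have hden : HasDerivAt (fun s => (u s)^3) (3 * (u x)^2 * u1 x) x := by
      have := hux.pow 3
      norm_num at this
      exact this
    have := hN.div hden (pow_ne_zero 3 (hF' x))
    refine this.congr_deriv ?_
    have h := hF' x
    simp only [Pi.mul_apply, Pi.pow_apply, Pi.div_apply, Pi.sub_apply, Pi.add_apply]
    push_cast
    field_simp
    ring
  -- schwarzian
  have hsch : schwarzian F = fun x => u2 x / u x - (3/2) * (u1 x / u x)^2 := by
    funext x
    rw [schwarzian, hit3, hit2]
  have hschd : ∀ x, HasDerivAt (schwarzian F)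
      ((deriv u2 x * (u x)^2 - 4 * u1 x * u2 x * u x + 3 * (u1 x)^3) / (u x)^3) x := by
    intro x
    rw [hsch]
    have hux : HasDerivAt u (u1 x) x := (hud x).hasDerivAt
    have hu1x : HasDerivAt u1 (u2 x) x := (hu1d x).hasDerivAt
    have hu2x : HasDerivAt u2 (deriv u2 x) x := (hu2d x).hasDerivAt
    have h1 := hu2x.div hux (hF' x)
    have h2 := ((hu1x.div hux (hF' x)).pow 2).const_mul ((3:ℝ)/2)
    have := h1.sub h2
    refine this.congr_deriv ?_
    have h := hF' x
    simp only [Pi.mul_apply, Pi.pow_apply, Pi.div_apply, Pi.sub_apply, Pi.add_apply]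
    push_cast
    field_simp
    ring
  -- final assembly
  intro x
  have e3 : iteratedDeriv 3 (fun s => y (F s) / u s) x
      = (deriv (deriv (deriv y)) (F x) * (u x)^6
        - 2 * deriv y (F x) * u2 x * (u x)^3
        + 3 * deriv y (F x) * (u1 x)^2 * (u x)^2
        - y (F x) * deriv u2 x * (u x)^2
        + 6 * y (F x) * u1 x * u2 x * u x
        - 6 * y (F x) * (u1 x)^3) / (u x)^4 := by
    rw [iteratedDeriv_succ, iteratedDeriv_succ, iteratedDeriv_one, hw1, hw2]
    exact (key3 x).deriv
  have e1 : deriv (fun s => y (F s) / u s) x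
      = deriv y (F x) - y (F x) * u1 x / (u x)^2 := (key1 x).deriv
  have esd : deriv (schwarzian F) x
      = (deriv u2 x * (u x)^2 - 4 * u1 x * u2 x * u x + 3 * (u1 x)^3) / (u x)^3 :=
    (hschd x).deriv
  have es : schwarzian F x = u2 x / u x - (3/2) * (u1 x / u x)^2 := by rw [hsch]
  have hodeF : deriv (deriv (deriv y)) (F x)
      = -(a1 (F x) * deriv y (F x) + a0 (F x) * y (F x)) := by
    have := hode (F x)
    rw [hit3y] at this
    linarith
  rw [e3, e1, esd, es, hit2, hodeF]
  have h := hF' x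
  field_simp
  ring
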